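/- arXiv:0806.2991 — 2 statements merged into one kernel-verified Lean document; each statement's English description precedes it below -/
import Mathlib

section
/- Let (A_i)_{i≥1} and (B_i)_{i≥1} be d×d complex matrices with all A_i invertible, and let (X_i)_{i≥0} be d×d matrices with X_0 = 0, X_1 = I_d, satisfying the three-term recursion A_i X_{i-1} + B_i X_i + A_{i+1}^† X_{i+1} = 0 for i ≥ 1. Let G_{dn} be the block tridiagonal Hermitian matrix with diagonal blocks B_1,…,B_n, subdiagonal blocks A_2,…,A_n and superdiagonal blocks A_2^†,…,A_n^†. Then det G_{dn} = (−1)^{dn} (∏_{i=2}^{n+1} det A_i) · det X_{n+1} (up to sign, |det G_{dn}| = ∏_{i=2}^{n+1} |det A_i| · |det X_{n+1}|). -/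
open scoped Matrix BigOperators

/-- The block tridiagonal Hermitian matrix with diagonal blocks `B 1, …, B n`,
subdiagonal blocks `A 2, …, A n` and superdiagonal blocks `(A 2)ᴴ, …, (A n)ᴴ`
(blocks indexed here by `Fin n`, with block `(i, j)` for 1-based indices `i+1, j+1`). -/
def blockTridiag {d : ℕ} (n : ℕ) (A B : ℕ → Matrix (Fin d) (Fin d) ℂ) :
    Matrix (Fin n × Fin d) (Fin n × Fin d) ℂ :=
  Matrix.of fun p q =>
    if (p.1 : ℕ) = (q.1 : ℕ) then B ((p.1 : ℕ) + 1) p.2 q.2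
    else if (p.1 : ℕ) = (q.1 : ℕ) + 1 then A ((p.1 : ℕ) + 1) p.2 q.2
    else if (q.1 : ℕ) = (p.1 : ℕ) + 1 then (A ((q.1 : ℕ) + 1))ᴴ p.2 q.2
    else 0

namespace AbsDetAux

variable {d n : ℕ}

def asm (M : Fin n → Fin n → Matrix (Fin d) (Fin d) ℂ) :
    Matrix (Fin n × Fin d) (Fin n × Fin d) ℂ :=
  Matrix.of fun p q => M p.1 q.1 p.2 q.2

lemma asm_mul (M N : Fin n → Fin n → Matrix (Fin d) (Fin d) ℂ) :
    asm M * asm N = asm fun i k => ∑ j, M i j * N j k := by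
  ext ⟨i, a⟩ ⟨k, c⟩
  simp only [asm, Matrix.mul_apply, Matrix.of_apply, Fintype.sum_prod_type]
  rw [Matrix.sum_apply]
  exact Finset.sum_congr rfl fun j _ => (Matrix.mul_apply).symm

lemma det_asm_upper (M : Fin n → Fin n → Matrix (Fin d) (Fin d) ℂ)
    (h : ∀ i j : Fin n, j < i → M i j = 0) :
    (asm M).det = ∏ i, (M i i).det := by
  have hbt : (asm M).BlockTriangular Prod.fst := by
    intro p q hlt
    simp [asm, h p.1 q.1 hlt]
  rw [hbt.det_fintype]
  refine Finset.prod_congr rfl fun k _ => ?_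
  let e : Fin d ≃ { p : Fin n × Fin d // p.1 = k } :=
    { toFun := fun a => ⟨(k, a), rfl⟩
      invFun := fun p => p.1.2
      left_inv := fun a => rfl
      right_inv := fun p => by
        obtain ⟨⟨p1, p2⟩, hp⟩ := p
        simp only at hp
        subst hp; rfl }
  have : (asm M).toSquareBlock Prod.fst k = ((M k k).submatrix e.symm e.symm) := by
    ext p q
    obtain ⟨⟨p1, p2⟩, hp⟩ := p
    obtain ⟨⟨q1, q2⟩, hq⟩ := q
    simp only at hp hq
    subst hp; subst hq
    rfl
  rw [this, Matrix.det_submatrix_equiv_self]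

lemma det_asm_lower (M : Fin n → Fin n → Matrix (Fin d) (Fin d) ℂ)
    (h : ∀ i j : Fin n, i < j → M i j = 0) :
    (asm M).det = ∏ i, (M i i).det := by
  have ht : (asm M)ᵀ = asm fun i j => (M j i)ᵀ := by
    ext ⟨i, a⟩ ⟨k, c⟩; rfl
  rw [← Matrix.det_transpose, ht, det_asm_upper _ fun i j hij => by simp [h j i hij]]
  exact Finset.prod_congr rfl fun k _ => Matrix.det_transpose _

lemma sum_ite_coe (g : Fin n → Matrix (Fin d) (Fin d) ℂ) (m : ℕ) :
    (∑ j : Fin n, if (j : ℕ) = m then g j else 0) = if h : m < n then g ⟨m, h⟩ else 0 := by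
  by_cases h : m < n
  · rw [dif_pos h, Finset.sum_eq_single ⟨m, h⟩]
    · rw [if_pos rfl]
    · intro b _ hb
      exact if_neg fun hc => hb (Fin.ext hc)
    · intro hb; exact absurd (Finset.mem_univ _) hb
  · rw [dif_neg h]
    exact Finset.sum_eq_zero fun j _ => if_neg fun hc => h (by simpa [← hc] using j.isLt)

/-- blocks of `blockTridiag` -/
noncomputable def Gb (A B : ℕ → Matrix (Fin d) (Fin d) ℂ) : Fin n → Fin n → Matrix (Fin d) (Fin d) ℂ :=
  fun i j =>
    if (i : ℕ) = (j : ℕ) then B ((i : ℕ) + 1)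
    else if (i : ℕ) = (j : ℕ) + 1 then A ((i : ℕ) + 1)
    else if (j : ℕ) = (i : ℕ) + 1 then (A ((j : ℕ) + 1))ᴴ
    else 0

lemma blockTridiag_eq_asm (A B : ℕ → Matrix (Fin d) (Fin d) ℂ) :
    blockTridiag n A B = asm (Gb A B) := by
  ext ⟨i, a⟩ ⟨k, c⟩
  simp only [blockTridiag, asm, Gb, Matrix.of_apply]
  split_ifs <;> rfl

noncomputable def Ub (X : ℕ → Matrix (Fin d) (Fin d) ℂ) : Fin n → Fin n → Matrix (Fin d) (Fin d) ℂ :=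
  fun j k => if (j : ℕ) ≤ (k : ℕ) then X ((j : ℕ) + 1) else 0

noncomputable def Lb (A X : ℕ → Matrix (Fin d) (Fin d) ℂ) : Fin n → Fin n → Matrix (Fin d) (Fin d) ℂ :=
  fun i k =>
    if (i : ℕ) = (k : ℕ) then -((A ((i : ℕ) + 2))ᴴ * X ((i : ℕ) + 2))
    else if (i : ℕ) = (k : ℕ) + 1 then A ((i : ℕ) + 1) * X (i : ℕ)
    else 0

lemma Gb_expand (A B : ℕ → Matrix (Fin d) (Fin d) ℂ) (i j : Fin n) :
    Gb A B i j =
      (if (j : ℕ) = (i : ℕ) then B ((i : ℕ) + 1) else 0)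
      + (if (i : ℕ) = (j : ℕ) + 1 then A ((i : ℕ) + 1) else 0)
      + (if (j : ℕ) = (i : ℕ) + 1 then (A ((j : ℕ) + 1))ᴴ else 0) := by
  unfold Gb
  by_cases h1 : (i : ℕ) = (j : ℕ)
  · rw [if_pos h1, if_pos h1.symm, if_neg (by omega), if_neg (by omega), add_zero, add_zero]
  · rw [if_neg h1, if_neg (by omega : ¬(j : ℕ) = (i : ℕ)), zero_add]
    by_cases h2 : (i : ℕ) = (j : ℕ) + 1
    · rw [if_pos h2, if_pos h2, if_neg (by omega), add_zero]
    · rw [if_neg h2, if_neg h2, zero_add]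

lemma core (A B X : ℕ → Matrix (Fin d) (Fin d) ℂ) (hX0 : X 0 = 0)
    (hrec : ∀ i, 1 ≤ i → A i * X (i - 1) + B i * X i + (A (i + 1))ᴴ * X (i + 1) = 0) :
    (blockTridiag n A B).det * ∏ p ∈ Finset.range n, (X (p + 1)).det
      = ∏ p ∈ Finset.range n, (-((A (p + 2))ᴴ * X (p + 2))).det := by
  have hblk : ∀ i k : Fin n, (∑ j, Gb (n:=n) A B i j * Ub (n:=n) X j k) = Lb (n:=n) A X i k := by
    intro i k
    -- expand the sum
    have hsum : (∑ j, Gb A B i j * Ub X j k)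
        = (∑ j : Fin n, if (j : ℕ) = (i : ℕ) then B ((i : ℕ) + 1) * Ub X j k else 0)
          + (∑ j : Fin n, if (j : ℕ) = (i : ℕ) - 1 then
              (if 1 ≤ (i : ℕ) then A ((i : ℕ) + 1) * Ub X j k else 0) else 0)
          + (∑ j : Fin n, if (j : ℕ) = (i : ℕ) + 1 then (A ((j : ℕ) + 1))ᴴ * Ub X j k else 0) := by
      rw [← Finset.sum_add_distrib, ← Finset.sum_add_distrib]
      refine Finset.sum_congr rfl fun j _ => ?_
      rw [Gb_expand, add_mul, add_mul]
      congr 1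
      · congr 1
        · split_ifs <;> simp
        · by_cases h2 : (i : ℕ) = (j : ℕ) + 1
          · rw [if_pos h2, if_pos (by omega), if_pos (by omega)]
          · rw [if_neg h2]
            by_cases h3 : (j : ℕ) = (i : ℕ) - 1
            · rw [if_pos h3, if_neg (by omega : ¬ 1 ≤ (i : ℕ)), zero_mul]
            · rw [if_neg h3, zero_mul]
      · split_ifs <;> simp
    rw [hsum, sum_ite_coe, sum_ite_coe, sum_ite_coe]
    simp only [Ub, Lb, Fin.eta, dif_pos i.isLt, Fin.val_mk]
    split_ifs
    all_goals try (exfalso; omega)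
    all_goals try simp only [mul_zero, add_zero, zero_add]
    all_goals try rw [show ((i : ℕ) - 1 + 1) = (i : ℕ) from by omega]
    all_goals try rfl
    all_goals try apply eq_neg_of_add_eq_zero_left
    all_goals
      (have hr := hrec ((i : ℕ) + 1) (by omega)
       simp only [Nat.add_sub_cancel] at hr
       rw [show ((i : ℕ) + 1 + 1) = ((i : ℕ) + 2) from rfl] at hr
       try rw [show ((i : ℕ) + 1 + 1) = ((i : ℕ) + 2) from rfl]
       first
       | (rw [add_comm (B ((i : ℕ) + 1) * X ((i : ℕ) + 1)) (A ((i : ℕ) + 1) * X (i : ℕ))]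
          exact hr)
       | (have hz : A ((i : ℕ) + 1) * X (i : ℕ) = 0 := by
            rw [show ((i : ℕ)) = 0 from by omega, hX0, mul_zero]
          rw [hz, zero_add] at hr
          exact hr))
  have hGU : asm (Gb (n:=n) A B) * asm (Ub (n:=n) X) = asm (Lb (n:=n) A X) := by
    rw [asm_mul]
    exact congrArg asm (funext fun i => funext fun k => hblk i k)
  have hdet := congrArg Matrix.det hGU
  rw [Matrix.det_mul] at hdet
  rw [blockTridiag_eq_asm]
  have hU : (asm (Ub (n := n) X)).det = ∏ p ∈ Finset.range n, (X (p + 1)).det := by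
    rw [det_asm_upper _ (fun i j hij => by
      unfold Ub; rw [if_neg (by exact_mod_cast not_le.mpr hij)])]
    rw [← Fin.prod_univ_eq_prod_range (fun p => (X (p + 1)).det) n]
    exact Finset.prod_congr rfl fun j _ => by unfold Ub; rw [if_pos le_rfl]
  have hL : (asm (Lb (n := n) A X)).det
      = ∏ p ∈ Finset.range n, (-((A (p + 2))ᴴ * X (p + 2))).det := by
    rw [det_asm_lower _ (fun i j hij => by
      unfold Lb; rw [if_neg (by omega), if_neg (by omega)])]
    rw [← Fin.prod_univ_eq_prod_range (fun p => (-((A (p + 2))ᴴ * X (p + 2))).det) n]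
    exact Finset.prod_congr rfl fun j _ => by unfold Lb; rw [if_pos rfl]
  rw [hU, hL] at hdet
  exact hdet

/-! ### Uniqueness of solutions of the recursion -/

lemma uniq (A BB : ℕ → Matrix (Fin d) (Fin d) ℂ) (hA : ∀ i, IsUnit (A i).det)
    (Y Z : ℕ → Matrix (Fin d) (Fin d) ℂ)
    (h0 : Y 0 = Z 0) (h1 : Y 1 = Z 1)
    (hY : ∀ i, 1 ≤ i → A i * Y (i - 1) + BB i * Y i + (A (i + 1))ᴴ * Y (i + 1) = 0)
    (hZ : ∀ i, 1 ≤ i → A i * Z (i - 1) + BB i * Z i + (A (i + 1))ᴴ * Z (i + 1) = 0) :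
    ∀ i, Y i = Z i := by
  intro i
  induction i using Nat.strong_induction_on with
  | _ i ih =>
    match i with
    | 0 => exact h0
    | 1 => exact h1
    | (j + 2) =>
      have hy := hY (j + 1) (by omega)
      have hz := hZ (j + 1) (by omega)
      simp only [Nat.add_sub_cancel] at hy hz
      rw [show j + 1 + 1 = j + 2 from rfl] at hy hz
      rw [ih j (by omega), ih (j + 1) (by omega)] at hy
      have hdet : IsUnit ((A (j + 2))ᴴ).det := by
        rw [Matrix.det_conjTranspose]; exact (hA _).star
      have hk : (A (j + 2))ᴴ * Y (j + 2) = (A (j + 2))ᴴ * Z (j + 2) := by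
        have e1 := eq_neg_of_add_eq_zero_right hy
        have e2 := eq_neg_of_add_eq_zero_right hz
        rw [e1, e2]
      calc Y (j + 2) = ((A (j + 2))ᴴ)⁻¹ * ((A (j + 2))ᴴ * Y (j + 2)) :=
            (Matrix.nonsing_inv_mul_cancel_left _ _ hdet).symm
        _ = ((A (j + 2))ᴴ)⁻¹ * ((A (j + 2))ᴴ * Z (j + 2)) := by rw [hk]
        _ = Z (j + 2) := Matrix.nonsing_inv_mul_cancel_left _ _ hdet

/-! ### The interpolating family -/

/-- target coefficients making the constant solution `0,1,1,1,…` -/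
noncomputable def Cm (A : ℕ → Matrix (Fin d) (Fin d) ℂ) : ℕ → Matrix (Fin d) (Fin d) ℂ :=
  fun j => if j = 1 then -(A 2)ᴴ else -A j - (A (j + 1))ᴴ

noncomputable def Bt (A B : ℕ → Matrix (Fin d) (Fin d) ℂ) (t : ℂ) :
    ℕ → Matrix (Fin d) (Fin d) ℂ :=
  fun j => B j + t • (Cm A j - B j)

/-- the canonical solution of the recursion at parameter `t` -/
noncomputable def Xc (A B : ℕ → Matrix (Fin d) (Fin d) ℂ) (t : ℂ) :
    ℕ → Matrix (Fin d) (Fin d) ℂ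
  | 0 => 0
  | 1 => 1
  | (i + 2) =>
      -(((A (i + 2))ᴴ)⁻¹ *
        (A (i + 1) * Xc A B t i + Bt A B t (i + 1) * Xc A B t (i + 1)))

lemma Xc_rec (A B : ℕ → Matrix (Fin d) (Fin d) ℂ) (hA : ∀ i, IsUnit (A i).det) (t : ℂ) :
    ∀ i, 1 ≤ i →
      A i * Xc A B t (i - 1) + Bt A B t i * Xc A B t i
        + (A (i + 1))ᴴ * Xc A B t (i + 1) = 0 := by
  rintro (_ | j) hj
  · omega
  · have hdet : IsUnit ((A (j + 2))ᴴ).det := by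
      rw [Matrix.det_conjTranspose]; exact (hA _).star
    simp only [Nat.add_sub_cancel]
    rw [show j + 1 + 1 = j + 2 from rfl, Xc, Matrix.mul_neg,
      Matrix.mul_nonsing_inv_cancel_left _ _ hdet]
    exact add_neg_cancel _

/-! ### Polynomial versions -/

open Polynomial in
noncomputable def BtP (A B : ℕ → Matrix (Fin d) (Fin d) ℂ) :
    ℕ → Matrix (Fin d) (Fin d) ℂ[X] :=
  fun j => (B j).map Polynomial.C + (Polynomial.X : ℂ[X]) • (Cm A j - B j).map Polynomial.C

open Polynomial in
noncomputable def XP (A B : ℕ → Matrix (Fin d) (Fin d) ℂ) :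
    ℕ → Matrix (Fin d) (Fin d) ℂ[X]
  | 0 => 0
  | 1 => 1
  | (i + 2) =>
      -((((A (i + 2))ᴴ)⁻¹).map Polynomial.C *
        ((A (i + 1)).map Polynomial.C * XP A B i + BtP A B (i + 1) * XP A B (i + 1)))

open Polynomial in
lemma map_BtP (A B : ℕ → Matrix (Fin d) (Fin d) ℂ) (t : ℂ) (j : ℕ) :
    (BtP A B j).map (Polynomial.evalRingHom t) = Bt A B t j := by
  ext a b
  simp [BtP, Bt, Matrix.map_apply, Matrix.add_apply, Matrix.smul_apply, smul_eq_mul,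
    Matrix.sub_apply]

open Polynomial in
lemma map_XP (A B : ℕ → Matrix (Fin d) (Fin d) ℂ) (t : ℂ) :
    ∀ i, (XP A B i).map (Polynomial.evalRingHom t) = Xc A B t i := by
  intro i
  induction i using Nat.strong_induction_on with
  | _ i ih =>
    match i with
    | 0 => exact Matrix.map_zero _ (map_zero _)
    | 1 => exact Matrix.map_one _ (map_zero _) (map_one _)
    | (j + 2) =>
      have φeq : ∀ M : Matrix (Fin d) (Fin d) ℂ[X],
          ((Polynomial.evalRingHom t).mapMatrix M : Matrix (Fin d) (Fin d) ℂ)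
            = M.map (Polynomial.evalRingHom t) := fun M => rfl
      have hmapC : ∀ M : Matrix (Fin d) (Fin d) ℂ,
          (M.map Polynomial.C).map (Polynomial.evalRingHom t) = M := by
        intro M; rw [Matrix.map_map]; ext a b
        simp [Matrix.map_apply]
      rw [XP, ← φeq, map_neg, map_mul, map_add, map_mul, map_mul]
      try simp only [φeq]
      rw [hmapC, hmapC, map_BtP, ih j (by omega), ih (j + 1) (by omega), Xc]

open Polynomial in
noncomputable def GP (A B : ℕ → Matrix (Fin d) (Fin d) ℂ) (n : ℕ) :
    Matrix (Fin n × Fin d) (Fin n × Fin d) ℂ[X] :=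
  Matrix.of fun p q =>
    if (p.1 : ℕ) = (q.1 : ℕ) then BtP A B ((p.1 : ℕ) + 1) p.2 q.2
    else if (p.1 : ℕ) = (q.1 : ℕ) + 1 then ((A ((p.1 : ℕ) + 1)).map Polynomial.C) p.2 q.2
    else if (q.1 : ℕ) = (p.1 : ℕ) + 1 then (((A ((q.1 : ℕ) + 1))ᴴ).map Polynomial.C) p.2 q.2
    else 0

open Polynomial in
lemma map_GP (A B : ℕ → Matrix (Fin d) (Fin d) ℂ) (t : ℂ) :
    (GP A B n).map (Polynomial.evalRingHom t) = blockTridiag n A (Bt A B t) := by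
  ext ⟨i, a⟩ ⟨k, c⟩
  simp only [GP, blockTridiag, Matrix.map_apply, Matrix.of_apply]
  split_ifs
  · exact congrFun (congrFun (congrArg Matrix.of (map_BtP A B t _)) a) c
  · simp
  · simp
  · exact map_zero _

lemma Bt_one (A B : ℕ → Matrix (Fin d) (Fin d) ℂ) (j : ℕ) : Bt A B 1 j = Cm A j := by
  simp [Bt]

lemma Bt_zero (A B : ℕ → Matrix (Fin d) (Fin d) ℂ) : Bt A B 0 = B := by
  funext j; simp [Bt]

lemma Xc_one (A B : ℕ → Matrix (Fin d) (Fin d) ℂ) (hA : ∀ i, IsUnit (A i).det) :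
    ∀ i, Xc A B 1 i = (fun j => if j = 0 then (0 : Matrix (Fin d) (Fin d) ℂ) else 1) i := by
  apply uniq A (Bt A B 1) hA
  · rfl
  · rfl
  · exact Xc_rec A B hA 1
  · rintro (_ | i) hi
    · omega
    · rw [Bt_one]
      match i with
      | 0 =>
        show A 1 * (if (0:ℕ) = 0 then (0 : Matrix (Fin d) (Fin d) ℂ) else 1) + _ + _ = 0
        simp [Cm]
      | (j + 1) =>
        show A (j + 2) * (if j + 1 = 0 then (0 : Matrix (Fin d) (Fin d) ℂ) else 1) + _ + _ = 0
        simp only [Nat.succ_ne_zero, if_neg, ite_false, mul_one, Cm]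
        rw [show j + 1 + 1 = j + 2 from rfl, show j + 1 + 1 + 1 = j + 3 from rfl]
        rw [if_neg (by omega : ¬ j + 2 = 1)]
        abel

lemma evdet {m : Type*} [Fintype m] [DecidableEq m] (t : ℂ)
    (M : Matrix m m (Polynomial ℂ)) :
    Polynomial.eval t M.det = (M.map (Polynomial.evalRingHom t)).det := by
  have h := RingHom.map_det (Polynomial.evalRingHom t) M
  rwa [RingHom.mapMatrix_apply] at h

lemma detXP_ne (A B : ℕ → Matrix (Fin d) (Fin d) ℂ) (hA : ∀ i, IsUnit (A i).det) (i : ℕ) :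
    ((XP A B (i + 1)).det) ≠ 0 := by
  intro h
  have h1 := evdet 1 (XP A B (i + 1))
  rw [map_XP A B 1 (i + 1), Xc_one A B hA (i + 1)] at h1
  simp only [Nat.succ_ne_zero, if_false, ite_false] at h1
  rw [h, Matrix.det_one] at h1
  simp at h1

lemma eval_eq (A B : ℕ → Matrix (Fin d) (Fin d) ℂ) (hA : ∀ i, IsUnit (A i).det) (t : ℂ)
    (hnz : ∀ i ∈ Finset.range (n + 1), (Xc A B t (i + 1)).det ≠ 0) :
    Polynomial.eval t (GP A B n).det
      = Polynomial.eval t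
          (Polynomial.C (∏ p ∈ Finset.range n, (-(A (p + 2))ᴴ).det)
            * (XP A B (n + 1)).det) := by
  have hcore := core (n := n) A (Bt A B t) (Xc A B t) rfl (Xc_rec A B hA t)
  have h1 : ∀ p : ℕ, (-((A (p + 2))ᴴ * Xc A B t (p + 2))).det
      = (-(A (p + 2))ᴴ).det * (Xc A B t (p + 2)).det := by
    intro p; rw [← Matrix.neg_mul, Matrix.det_mul]
  rw [Finset.prod_congr rfl (fun p _ => h1 p), Finset.prod_mul_distrib] at hcore
  have hsh : (∏ p ∈ Finset.range n, (Xc A B t (p + 2)).det)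
      = (∏ p ∈ Finset.range n, (Xc A B t (p + 1)).det) * (Xc A B t (n + 1)).det := by
    have e1 := Finset.prod_range_succ (fun p => (Xc A B t (p + 1)).det) n
    have e2 := Finset.prod_range_succ' (fun p => (Xc A B t (p + 1)).det) n
    have hx1 : (Xc A B t (0 + 1)).det = 1 := by
      show (Xc A B t 1).det = 1
      rw [show Xc A B t 1 = 1 from rfl, Matrix.det_one]
    rw [hx1, mul_one] at e2
    rw [← e2, e1]
  rw [hsh] at hcore
  have hPi : (∏ p ∈ Finset.range n, (Xc A B t (p + 1)).det) ≠ 0 :=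
    Finset.prod_ne_zero_iff.mpr fun p hp =>
      hnz p (Finset.mem_range.mpr (lt_trans (Finset.mem_range.mp hp) (Nat.lt_succ_self n)))
  have hdetG : (blockTridiag n A (Bt A B t)).det
      = (∏ p ∈ Finset.range n, (-(A (p + 2))ᴴ).det) * (Xc A B t (n + 1)).det := by
    apply mul_right_cancel₀ hPi
    rw [hcore]; ring
  have hG := evdet t (GP A B n)
  rw [map_GP A B t] at hG
  have hX := evdet t (XP A B (n + 1))
  rw [map_XP A B t (n + 1)] at hX
  rw [Polynomial.eval_mul, Polynomial.eval_C, hG, hX, hdetG]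

lemma det_blockTridiag (A B X : ℕ → Matrix (Fin d) (Fin d) ℂ)
    (hA : ∀ i, IsUnit (A i).det)
    (hX0 : X 0 = 0) (hX1 : X 1 = 1)
    (hrec : ∀ i, 1 ≤ i → A i * X (i - 1) + B i * X i + (A (i + 1))ᴴ * X (i + 1) = 0) :
    (blockTridiag n A B).det
      = (∏ p ∈ Finset.range n, (-(A (p + 2))ᴴ).det) * (X (n + 1)).det := by
  have hPQ : (GP A B n).det
      = Polynomial.C (∏ p ∈ Finset.range n, (-(A (p + 2))ᴴ).det) * (XP A B (n + 1)).det := by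
    apply Polynomial.eq_of_infinite_eval_eq
    have hS : (⋃ i ∈ Finset.range (n + 1),
        {t : ℂ | ((XP A B (i + 1)).det).IsRoot t}).Finite :=
      Set.Finite.biUnion (Finset.range (n + 1)).finite_toSet
        (fun i _ => Polynomial.finite_setOf_isRoot (detXP_ne A B hA i))
    refine hS.infinite_compl.mono ?_
    intro t ht
    simp only [Set.mem_compl_iff, Set.mem_iUnion, not_exists, Set.mem_setOf_eq] at ht
    refine eval_eq A B hA t fun i hi => ?_
    have h1 := evdet t (XP A B (i + 1))
    rw [map_XP A B t (i + 1)] at h1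
    intro hz
    exact ht i hi (h1.trans hz)
  have hXc0 : ∀ i, Xc A B 0 i = X i := by
    apply uniq A B hA
    · exact hX0.symm
    · exact hX1.symm
    · have h := Xc_rec A B hA 0
      rw [Bt_zero A B] at h
      exact h
    · exact hrec
  have hG := evdet 0 (GP A B n)
  rw [map_GP A B 0, Bt_zero A B] at hG
  have hX := evdet 0 (XP A B (n + 1))
  rw [map_XP A B 0 (n + 1), hXc0 (n + 1)] at hX
  calc (blockTridiag n A B).det
      = Polynomial.eval 0 (GP A B n).det := hG.symm
    _ = Polynomial.eval 0
          (Polynomial.C (∏ p ∈ Finset.range n, (-(A (p + 2))ᴴ).det)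
            * (XP A B (n + 1)).det) := by rw [hPQ]
    _ = (∏ p ∈ Finset.range n, (-(A (p + 2))ᴴ).det) * (X (n + 1)).det := by
        rw [Polynomial.eval_mul, Polynomial.eval_C, hX]

end AbsDetAux

/-- **Determinant identity for block tridiagonal matrices (Narula-type decomposition).**
Let `(A i)` and `(B i)` be `d × d` complex matrices with all `A i` invertible, and
`(X i)` satisfy `X 0 = 0`, `X 1 = 1`, and the three-term recursion
`A i * X (i-1) + B i * X i + (A (i+1))ᴴ * X (i+1) = 0` for `i ≥ 1`.  Then, with
`G` the block tridiagonal matrix built from the `B`'s and `A`'s,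
`|det G| = (∏_{i=2}^{n+1} |det (A i)|) * |det (X (n+1))|`. -/
theorem abs_det_blockTridiag (d n : ℕ) (A B X : ℕ → Matrix (Fin d) (Fin d) ℂ)
    (hA : ∀ i, IsUnit (A i).det)
    (hX0 : X 0 = 0) (hX1 : X 1 = 1)
    (hrec : ∀ i, 1 ≤ i → A i * X (i - 1) + B i * X i + (A (i + 1))ᴴ * X (i + 1) = 0) :
    ‖(blockTridiag n A B).det‖
      = (∏ i ∈ Finset.range n, ‖(A (i + 2)).det‖)
        * ‖(X (n + 1)).det‖ := by
  rw [AbsDetAux.det_blockTridiag A B X hA hX0 hX1 hrec, norm_mul, norm_prod]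
  congr 1
  refine Finset.prod_congr rfl fun i _ => ?_
  rw [Matrix.det_neg, Matrix.det_conjTranspose]
  simp [Fintype.card_fin, map_mul, map_pow,
    show (star ((A (i + 2)).det)) = (starRingEnd ℂ) ((A (i + 2)).det) from rfl,
    Complex.norm_conj]
end

section
/- Let g, h : ℂ → ℝ ∪ {−∞} be subharmonic functions on ℂ that agree on ℂ \ ℝ. Then g = h on all of ℂ. -/
open MeasureTheory
open scoped ENNReal

noncomputable section

/-- The canonical map `EReal → ℝ≥0∞` (nonpositive values go to `0`, `⊤` to `⊤`). -/
def erealToENNReal (x : EReal) : ℝ≥0∞ :=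
  if x = ⊤ then ⊤ else ENNReal.ofReal x.toReal

/-- The mean of an `EReal`-valued function over the circle of center `z` and radius `r`,
defined as the difference of the lower integrals of its positive and negative parts
(normalized by `(2π)⁻¹`, the normalization being applied outside). -/
def circleIntegralE (g : ℂ → EReal) (z : ℂ) (r : ℝ) : EReal :=
  ((∫⁻ θ in Set.Ioc (0 : ℝ) (2 * Real.pi),
      erealToENNReal (g (z + r * Complex.exp (θ * Complex.I))) : ℝ≥0∞) : EReal)
    - ((∫⁻ θ in Set.Ioc (0 : ℝ) (2 * Real.pi),
      erealToENNReal (-(g (z + r * Complex.exp (θ * Complex.I)))) : ℝ≥0∞) : EReal)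

/-- A function `g : ℂ → ℝ ∪ {−∞}` is subharmonic if it is upper semicontinuous and
satisfies the sub-mean-value inequality on every circle. -/
def SubharmonicE (g : ℂ → EReal) : Prop :=
  UpperSemicontinuous g ∧
    ∀ z : ℂ, ∀ r : ℝ, 0 < r →
      g z ≤ (((2 * Real.pi)⁻¹ : ℝ) : EReal) * circleIntegralE g z r

lemma erealToENNReal_le_ofReal {x : EReal} {c : ℝ} (hx : x ≤ (c : EReal)) :
    erealToENNReal x ≤ ENNReal.ofReal c := by
  have hxt : x ≠ ⊤ := fun h => by simp [h] at hx
  rw [erealToENNReal, if_neg hxt]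
  rcases eq_or_ne x ⊥ with hb | hb
  · simp [hb]
  · exact ENNReal.ofReal_le_ofReal (by simpa using EReal.toReal_le_toReal hx hb (by simp))

lemma ofReal_le_erealToENNReal {x : EReal} {c : ℝ} (hc : (c : EReal) ≤ x) :
    ENNReal.ofReal c ≤ erealToENNReal x := by
  rcases eq_or_ne x ⊤ with ht | ht
  · simp [erealToENNReal, ht]
  · rw [erealToENNReal, if_neg ht]
    have hb : x ≠ ⊥ := fun h => by rw [h, le_bot_iff] at hc; exact (EReal.coe_ne_bot c) hc
    exact ENNReal.ofReal_le_ofReal (by simpa using EReal.toReal_le_toReal hc (by simp) ht)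

lemma erealToENNReal_eq_zero_of_nonpos {x : EReal} (hx : x ≤ 0) : erealToENNReal x = 0 := by
  have hxt : x ≠ ⊤ := fun h => by simp [h] at hx
  rw [erealToENNReal, if_neg hxt]
  simp only [ENNReal.ofReal_eq_zero]
  rcases eq_or_ne x ⊥ with hb | hb
  · simp [hb]
  · simpa using EReal.toReal_le_toReal hx hb (by simp)

lemma circleIntegralE_le {h : ℂ → EReal} {z : ℂ} {r c : ℝ}
    (hb : ∀ θ ∈ Set.Ioc (0:ℝ) (2*Real.pi),
      h (z + r * Complex.exp (θ * Complex.I)) ≤ (c : EReal)) :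
    circleIntegralE h z r ≤ ((2 * Real.pi * c : ℝ) : EReal) := by
  have hvol : (volume (Set.Ioc (0:ℝ) (2*Real.pi))) = ENNReal.ofReal (2*Real.pi) := by
    rw [Real.volume_Ioc]; norm_num
  have hmeas : MeasurableSet (Set.Ioc (0:ℝ) (2*Real.pi)) := measurableSet_Ioc
  set A := (∫⁻ θ in Set.Ioc (0 : ℝ) (2 * Real.pi),
      erealToENNReal (h (z + r * Complex.exp (θ * Complex.I))) : ℝ≥0∞) with hA
  set B := (∫⁻ θ in Set.Ioc (0 : ℝ) (2 * Real.pi),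
      erealToENNReal (-(h (z + r * Complex.exp (θ * Complex.I)))) : ℝ≥0∞) with hB
  rcases le_or_gt 0 c with hc | hc
  · -- A ≤ ofReal (2π c), B ≥ 0
    have hAle : A ≤ ENNReal.ofReal (2 * Real.pi * c) := by
      calc A ≤ ∫⁻ _ in Set.Ioc (0:ℝ) (2*Real.pi), ENNReal.ofReal c := by
              refine lintegral_mono_ae ((ae_restrict_iff' hmeas).2 (ae_of_all _ ?_))
              exact fun θ hθ => erealToENNReal_le_ofReal (hb θ hθ)
        _ = ENNReal.ofReal c * ENNReal.ofReal (2*Real.pi) := by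
              rw [setLIntegral_const, hvol]
        _ = ENNReal.ofReal (2 * Real.pi * c) := by
              rw [← ENNReal.ofReal_mul hc]; ring_nf
    calc circleIntegralE h z r ≤ (A : EReal) - 0 :=
          EReal.sub_le_sub le_rfl (EReal.coe_ennreal_nonneg B)
      _ = (A : EReal) := by simp
      _ ≤ ((ENNReal.ofReal (2 * Real.pi * c) : ℝ≥0∞) : EReal) :=
          EReal.coe_ennreal_le_coe_ennreal_iff.2 hAle
      _ = ((2 * Real.pi * c : ℝ) : EReal) := by
          rw [EReal.coe_ennreal_ofReal,
            max_eq_left (mul_nonneg (by positivity) hc)]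
  · -- A = 0, B ≥ ofReal (-(2π c))
    have hA0 : A = 0 := by
      refine le_antisymm ?_ zero_le
      calc A ≤ ∫⁻ _ in Set.Ioc (0:ℝ) (2*Real.pi), (0:ℝ≥0∞) := by
            refine lintegral_mono_ae ((ae_restrict_iff' hmeas).2 (ae_of_all _ ?_))
            intro θ hθ
            rw [erealToENNReal_eq_zero_of_nonpos
              (le_trans (hb θ hθ) (by exact_mod_cast hc.le))]
        _ = 0 := lintegral_zero
    have hBge : ENNReal.ofReal (-(2 * Real.pi * c)) ≤ B := by
      calc ENNReal.ofReal (-(2 * Real.pi * c))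
          = ENNReal.ofReal (-c) * ENNReal.ofReal (2*Real.pi) := by
            rw [← ENNReal.ofReal_mul (by linarith)]; ring_nf
        _ = ∫⁻ _ in Set.Ioc (0:ℝ) (2*Real.pi), ENNReal.ofReal (-c) := by
            rw [setLIntegral_const, hvol]
        _ ≤ B := by
            refine lintegral_mono_ae ((ae_restrict_iff' hmeas).2 (ae_of_all _ ?_))
            intro θ hθ
            refine ofReal_le_erealToENNReal ?_
            rw [EReal.coe_neg]
            exact EReal.neg_le_neg_iff.2 (hb θ hθ)
    calc circleIntegralE h z r = (0 : EReal) - (B : EReal) := by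
          rw [circleIntegralE, ← hA, ← hB, hA0]; simp
      _ ≤ (0 : EReal) - ((ENNReal.ofReal (-(2 * Real.pi * c)) : ℝ≥0∞) : EReal) :=
          EReal.sub_le_sub le_rfl (EReal.coe_ennreal_le_coe_ennreal_iff.2 hBge)
      _ = ((2 * Real.pi * c : ℝ) : EReal) := by
          rw [EReal.coe_ennreal_ofReal, max_eq_left (by nlinarith [Real.pi_pos])]
          rw [zero_sub, ← EReal.coe_neg, neg_neg]

lemma sin_ne_zero_ae : ∀ᵐ θ : ℝ, Real.sin θ ≠ 0 := by
  have hsub : {θ : ℝ | Real.sin θ = 0} ⊆ Set.range (fun n : ℤ => (n : ℝ) * Real.pi) := by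
    intro θ hθ; obtain ⟨n, hn⟩ := Real.sin_eq_zero_iff.1 hθ; exact ⟨n, hn⟩
  have h0 : volume {θ : ℝ | Real.sin θ = 0} = 0 :=
    measure_mono_null hsub ((Set.countable_range _).measure_zero _)
  rw [ae_iff]; simpa using h0

lemma circleIntegralE_congr {g h : ℂ → EReal} {z : ℂ} {r : ℝ} (hz : z.im = 0) (hr : r ≠ 0)
    (heq : ∀ w : ℂ, w.im ≠ 0 → g w = h w) :
    circleIntegralE g z r = circleIntegralE h z r := by
  have hae : ∀ᵐ θ : ℝ, g (z + r * Complex.exp (θ * Complex.I))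
      = h (z + r * Complex.exp (θ * Complex.I)) := by
    filter_upwards [sin_ne_zero_ae] with θ hθ
    apply heq
    have him : (z + (r:ℂ) * Complex.exp (θ * Complex.I)).im = r * Real.sin θ := by
      simp [Complex.add_im, Complex.mul_im, Complex.exp_ofReal_mul_I_im, hz]
    rw [him]; exact mul_ne_zero hr hθ
  rw [circleIntegralE, circleIntegralE]
  congr 2
  · exact lintegral_congr_ae (ae_restrict_of_ae (hae.mono fun θ hθ => by simp only [hθ]))
  · exact lintegral_congr_ae (ae_restrict_of_ae (hae.mono fun θ hθ => by simp only [hθ]))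

lemma ereal_le_of_forall_real {x y : EReal} (H : ∀ c : ℝ, y < (c : EReal) → x ≤ (c : EReal)) :
    x ≤ y := by
  by_contra hxy
  rcases EReal.exists_between_coe_real (not_le.1 hxy) with ⟨c, hc1, hc2⟩
  exact absurd (H c hc1) (not_le.2 hc2)

/-- **Identity principle for subharmonic functions off the real axis.** Two subharmonic
functions `g, h : ℂ → ℝ ∪ {−∞}` that agree on `ℂ \ ℝ` agree on all of `ℂ`. -/
theorem subharmonic_eq_of_eq_off_real (g h : ℂ → EReal)
    (hg : SubharmonicE g) (hh : SubharmonicE h)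
    (heq : ∀ z : ℂ, z.im ≠ 0 → g z = h z)
    (hg' : ∀ z, g z ≠ ⊤) (hh' : ∀ z, h z ≠ ⊤) :
    g = h := by
  have key : ∀ (g h : ℂ → EReal), SubharmonicE g → SubharmonicE h →
      (∀ z, z.im ≠ 0 → g z = h z) → ∀ z : ℂ, z.im = 0 → g z ≤ h z := by
    intro g h hg hh heq z hz
    refine ereal_le_of_forall_real fun c hc => ?_
    have hev := hh.1 z (c : EReal) hc
    rw [Metric.eventually_nhds_iff] at hev
    obtain ⟨ε, hε, hball⟩ := hev
    set r := ε / 2 with hrdef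
    have hr : 0 < r := half_pos hε
    have hbd : ∀ θ ∈ Set.Ioc (0:ℝ) (2*Real.pi),
        h (z + r * Complex.exp (θ * Complex.I)) ≤ (c : EReal) := by
      intro θ _
      refine (hball ?_).le
      have hd : dist (z + (r:ℂ) * Complex.exp (θ * Complex.I)) z = r := by
        rw [Complex.dist_eq]
        simp [add_sub_cancel_left, map_mul, Complex.norm_real,
          Complex.norm_exp_ofReal_mul_I, abs_of_pos hr]
      rw [hd]; exact half_lt_self hε
    have h1 := hg.2 z r hr
    rw [circleIntegralE_congr hz hr.ne' heq] at h1
    calc g z ≤ (((2 * Real.pi)⁻¹ : ℝ) : EReal) * circleIntegralE h z r := h1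
      _ ≤ (((2 * Real.pi)⁻¹ : ℝ) : EReal) * ((2 * Real.pi * c : ℝ) : EReal) :=
          mul_le_mul_of_nonneg_left (circleIntegralE_le hbd)
            (by exact_mod_cast (inv_nonneg.2 (by positivity) : (0:ℝ) ≤ (2*Real.pi)⁻¹))
      _ = (c : EReal) := by
          rw [← EReal.coe_mul]
          norm_cast
          field_simp
  funext z
  rcases eq_or_ne z.im 0 with hz | hz
  · exact le_antisymm (key g h hg hh heq z hz)
      (key h g hh hg (fun w hw => (heq w hw).symm) z hz)
  · exact heq z hz

end
end
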